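/- Assume −a0/a1 > x_T > d2 > d1 and d2 + a0/a1 ≤ (x_T + a0/a1)·cosh(a1·T). Then for every x ∈ (d1,d2) and every s ∈ [0,T), the function t ↦ x⁰_{x,s}(t) is monotone nondecreasing on [s,T]. -/
import Mathlib


/-- The deterministic trajectory `x⁰_{x,s}`. -/
noncomputable def traj (a0 a1 T xT x s t : ℝ) : ℝ :=
  (x + a0 / a1) * Real.sinh (a1 * (T - t)) / Real.sinh (a1 * (T - s)) +
    (xT + a0 / a1) * Real.sinh (a1 * (t - s)) / Real.sinh (a1 * (T - s)) - a0 / a1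

theorem stmt_3 (a0 a1 T xT d1 d2 : ℝ) (ha1 : a1 ≠ 0) (hT : 0 < T)
    (h1 : -(a0 / a1) > xT) (h2 : xT > d2) (h3 : d2 > d1)
    (h4 : d2 + a0 / a1 ≤ (xT + a0 / a1) * Real.cosh (a1 * T)) :
    ∀ x ∈ Set.Ioo d1 d2, ∀ s, 0 ≤ s → s < T →
      MonotoneOn (traj a0 a1 T xT x s) (Set.Icc s T) := by
  intro x hx s hs0 hsT
  set c := a0 / a1 with hc
  set S := Real.sinh (a1 * (T - s)) with hS
  have hTs : 0 < T - s := by linarith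
  have haS : 0 < a1 * S := by
    rcases lt_or_gt_of_ne ha1 with hneg | hpos
    · have : a1 * (T - s) < 0 := mul_neg_of_neg_of_pos hneg hTs
      have hSneg : S < 0 := by
        rw [hS]
        have := Real.sinh_lt_sinh.mpr this
        simpa using this
      exact mul_pos_of_neg_of_neg hneg hSneg
    · have : 0 < a1 * (T - s) := mul_pos hpos hTs
      have hSpos : 0 < S := by
        rw [hS]
        have := Real.sinh_lt_sinh.mpr this
        simpa using this
      exact mul_pos hpos hSpos
  have hSne : S ≠ 0 := by
    intro h; rw [h, mul_zero] at haS; exact lt_irrefl 0 haS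
  apply monotoneOn_of_deriv_nonneg (convex_Icc s T)
  · unfold traj
    fun_prop (disch := exact hSne)
  · intro t ht
    apply DifferentiableAt.differentiableWithinAt
    unfold traj
    fun_prop (disch := exact hSne)
  · intro t ht
    rw [interior_Icc] at ht
    obtain ⟨hts, htT⟩ := ht
    have hA : HasDerivAt (fun t : ℝ => a1 * (T - t)) (-a1) t := by
      simpa using ((hasDerivAt_id t).const_sub T).const_mul a1
    have hB : HasDerivAt (fun t : ℝ => a1 * (t - s)) a1 t := by
      simpa using ((hasDerivAt_id t).sub_const s).const_mul a1
    have hsA : HasDerivAt (fun t : ℝ => Real.sinh (a1 * (T - t)))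
        (Real.cosh (a1 * (T - t)) * (-a1)) t :=
      (Real.hasDerivAt_sinh _).comp t hA
    have hsB : HasDerivAt (fun t : ℝ => Real.sinh (a1 * (t - s)))
        (Real.cosh (a1 * (t - s)) * a1) t :=
      (Real.hasDerivAt_sinh _).comp t hB
    have hD : HasDerivAt (traj a0 a1 T xT x s)
        ((x + c) * (Real.cosh (a1 * (T - t)) * (-a1)) / S +
          (xT + c) * (Real.cosh (a1 * (t - s)) * a1) / S) t := by
      unfold traj
      exact (((hsA.const_mul (x + c)).div_const S).add
        ((hsB.const_mul (xT + c)).div_const S)).sub_const c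
    rw [hD.deriv]
    have key : (x + c) * (Real.cosh (a1 * (T - t)) * (-a1)) / S +
        (xT + c) * (Real.cosh (a1 * (t - s)) * a1) / S =
        ((-(x + c)) * Real.cosh (a1 * (T - t)) - (-(xT + c)) * Real.cosh (a1 * (t - s)))
          * (a1 * S) / (S * S) := by
      field_simp
      ring
    rw [key]
    apply div_nonneg _ (mul_self_nonneg S)
    apply mul_nonneg _ haS.le
    -- main inequality
    set u := -(x + c) with hu
    set v := -(xT + c) with hv
    have hvpos : 0 < v := by simp only [hv]; linarith
    have huv : v * Real.cosh (a1 * T) ≤ u := by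
      have : v * Real.cosh (a1 * T) ≤ -(d2 + c) := by nlinarith
      have hxd : x < d2 := hx.2
      simp only [hu]; linarith
    have hcAB : Real.cosh (a1 * (t - s)) ≤ Real.cosh (a1 * T) := by
      rw [Real.cosh_le_cosh, abs_mul, abs_mul]
      apply mul_le_mul_of_nonneg_left _ (abs_nonneg a1)
      rw [abs_of_nonneg (by linarith : (0:ℝ) ≤ t - s), abs_of_pos hT]
      linarith
    have h1le : 1 ≤ Real.cosh (a1 * (T - t)) := Real.one_le_cosh _
    have step1 : v * Real.cosh (a1 * (t - s)) ≤ v * Real.cosh (a1 * T) :=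
      mul_le_mul_of_nonneg_left hcAB hvpos.le
    have step2 : v * Real.cosh (a1 * T) ≤ v * Real.cosh (a1 * T) * Real.cosh (a1 * (T - t)) :=
      le_mul_of_one_le_right (by positivity) h1le
    have step3 : v * Real.cosh (a1 * T) * Real.cosh (a1 * (T - t)) ≤
        u * Real.cosh (a1 * (T - t)) :=
      mul_le_mul_of_nonneg_right huv (by positivity)
    linarith
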